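/- arXiv:1007.4143 — 2 statements merged into one kernel-verified Lean document; each statement's English description precedes it below -/
import Mathlib

section
/- If the orthogonal projections π_F and π_α commute, then (π_F − π_F^⊥)(π_α − π_α^⊥) = π_G − π_G^⊥, where G is the subspace G = (α ∩ F) ⊕ (α^⊥ ∩ F^⊥) (an orthogonal direct sum). -/
/-- The orthogonal projection of `V` onto the subspace `F`, as an endomorphism of `V`. -/
noncomputable def proj {V : Type*} [NormedAddCommGroup V] [InnerProductSpace ℂ V]
    [FiniteDimensional ℂ V] (F : Submodule ℂ V) : V →L[ℂ] V :=
  F.subtypeL.comp (F.orthogonalProjectionOnto)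

/-- The self-adjoint unitary involution `π_F − π_F^⊥` associated to a subspace `F`
(the image of `F` under the Cartan embedding), where `π_F^⊥ = 1 − π_F`. -/
noncomputable def invo {V : Type*} [NormedAddCommGroup V] [InnerProductSpace ℂ V]
    [FiniteDimensional ℂ V] (F : Submodule ℂ V) : V →L[ℂ] V :=
  proj F - (1 - proj F)

section aux

variable {V : Type*} [NormedAddCommGroup V] [InnerProductSpace ℂ V] [FiniteDimensional ℂ V]

lemma proj_mem (F : Submodule ℂ V) (x : V) : proj F x ∈ F :=
  (F.orthogonalProjectionOnto x).2

lemma proj_eq_self {F : Submodule ℂ V} {x : V} (hx : x ∈ F) : proj F x = x :=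
  Submodule.starProjection_eq_self_iff.2 hx

lemma proj_eq_zero {F : Submodule ℂ V} {x : V} (hx : x ∈ Fᗮ) : proj F x = 0 := by
  have : F.orthogonalProjectionOnto x = 0 := Submodule.orthogonalProjectionOnto_eq_zero_iff.2 hx
  simp [proj, this]

lemma inner_proj (F : Submodule ℂ V) (x y : V) :
    (inner ℂ (proj F x) y : ℂ) = inner ℂ x (proj F y) :=
  Submodule.inner_starProjection_left_eq_right (K := F) x y

lemma proj_orthogonal (F : Submodule ℂ V) : proj Fᗮ = 1 - proj F := by
  ext x
  simpa [proj] using Submodule.starProjection_orthogonal_val (K := F) x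

/-- key lemma: commuting projections compose to the projection on the intersection -/
lemma proj_comp_proj (F α : Submodule ℂ V)
    (h : proj F ∘L proj α = proj α ∘L proj F) :
    proj (α ⊓ F) = proj F ∘L proj α := by
  have hc : ∀ x : V, proj F (proj α x) = proj α (proj F x) := fun x =>
    congrFun (congrArg DFunLike.coe (congrArg ContinuousLinearMap.toLinearMap h)) x
  ext x
  refine Submodule.eq_starProjection_of_mem_of_inner_eq_zero ?_ ?_
  · exact ⟨by simp only [ContinuousLinearMap.comp_apply]; rw [hc x]; exact proj_mem _ _,
      proj_mem _ _⟩
  · rintro w ⟨hwα, hwF⟩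
    simp only [ContinuousLinearMap.comp_apply]
    rw [inner_sub_left, inner_proj, proj_eq_self hwF, inner_proj, proj_eq_self hwα, sub_self]

end aux

/-- If `π_F` and `π_α` commute, then
`(π_F − π_F^⊥)(π_α − π_α^⊥) = π_G − π_G^⊥` where `G = (α ∩ F) ⊕ (α^⊥ ∩ F^⊥)`. -/
theorem invo_mul_invo_eq_invo {V : Type*} [NormedAddCommGroup V]
    [InnerProductSpace ℂ V] [FiniteDimensional ℂ V] (F α : Submodule ℂ V)
    (h : proj F ∘L proj α = proj α ∘L proj F) :
    invo F ∘L invo α = invo ((α ⊓ F) ⊔ (αᗮ ⊓ Fᗮ)) := by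
  set P := proj F with hP
  set Q := proj α with hQ
  have h' : proj Fᗮ ∘L proj αᗮ = proj αᗮ ∘L proj Fᗮ := by
    rw [proj_orthogonal, proj_orthogonal]
    change (1 - P) * (1 - Q) = (1 - Q) * (1 - P)
    have : P * Q = Q * P := h
    noncomm_ring [this]
  have hA : proj (α ⊓ F) = P ∘L Q := proj_comp_proj F α h
  have hA' : proj (αᗮ ⊓ Fᗮ) = (1 - P) ∘L (1 - Q) := by
    rw [proj_comp_proj Fᗮ αᗮ h', proj_orthogonal, proj_orthogonal]
  -- projection onto the orthogonal sum is the sum of projections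
  have hB : proj ((α ⊓ F) ⊔ (αᗮ ⊓ Fᗮ)) = P ∘L Q + (1 - P) ∘L (1 - Q) := by
    ext x
    refine Submodule.eq_starProjection_of_mem_of_inner_eq_zero ?_ ?_
    · refine Submodule.add_mem_sup ?_ ?_
      · rw [← hA]; exact proj_mem _ _
      · rw [← hA']; exact proj_mem _ _
    · intro w hw
      rw [Submodule.mem_sup] at hw
      obtain ⟨y, hy, z, hz, rfl⟩ := hw
      have hxy : (inner ℂ (x - (P (Q x) + (1 - P) ((1 - Q) x))) y : ℂ) = 0 := by
        obtain ⟨hyα, hyF⟩ := hy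
        have h1 : (inner ℂ (x - P (Q x)) y : ℂ) = 0 := by
          rw [inner_sub_left, inner_proj, proj_eq_self hyF, inner_proj, proj_eq_self hyα,
            sub_self]
        have h2 : (inner ℂ ((1 - P) ((1 - Q) x)) y : ℂ) = 0 := by
          have : (1 - P) ((1 - Q) x) = proj Fᗮ (proj αᗮ x) := by
            rw [proj_orthogonal, proj_orthogonal]
          rw [this, inner_proj, proj_eq_zero (Submodule.le_orthogonal_orthogonal F hyF),
            inner_zero_right]
        have : x - (P (Q x) + (1 - P) ((1 - Q) x)) =
            (x - P (Q x)) - (1 - P) ((1 - Q) x) := by abel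
        rw [this, inner_sub_left, h1, h2, sub_self]
      have hxz : (inner ℂ (x - (P (Q x) + (1 - P) ((1 - Q) x))) z : ℂ) = 0 := by
        obtain ⟨hzα, hzF⟩ := hz
        have h2 : (inner ℂ (x - (1 - P) ((1 - Q) x)) z : ℂ) = 0 := by
          have e1 : (1 - P) ((1 - Q) x) = proj Fᗮ (proj αᗮ x) := by
            rw [proj_orthogonal, proj_orthogonal]
          rw [e1, inner_sub_left, inner_proj, proj_eq_self hzF, inner_proj, proj_eq_self hzα,
            sub_self]
        have h1 : (inner ℂ (P (Q x)) z : ℂ) = 0 := by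
          rw [inner_proj, proj_eq_zero hzF, inner_zero_right]
        have : x - (P (Q x) + (1 - P) ((1 - Q) x)) =
            (x - (1 - P) ((1 - Q) x)) - P (Q x) := by abel
        rw [this, inner_sub_left, h1, h2, sub_self]
      simp only [ContinuousLinearMap.add_apply, ContinuousLinearMap.comp_apply]
      rw [inner_add_right, hxy, hxz, add_zero]
  show (P - (1 - P)) * (Q - (1 - Q)) = invo _
  unfold invo
  rw [hB]
  change _ = (P * Q + (1 - P) * (1 - Q)) - (1 - (P * Q + (1 - P) * (1 - Q)))
  noncomm_ring
end

section
/- Assume p_l + q_l = 1 in R for every l. Let M be a (left) R-module and H_1, …, H_i elements of M. Then Σ_{t=0}^{i−1} C^{i−1}_t H_{t+1} = Σ_{l=0}^{i−1} S^{i−1}_l ( Σ_{t=0}^{l} binom(l, t) H_{t+1} ), where binom(l,t) is the binomial coefficient. -/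
/-- The `s`'th elementary function of `q 1, …, q i`:
`C^i_s = Σ_{1 ≤ i_1 < ⋯ < i_s ≤ i} q_{i_s} ⋯ q_{i_1}` (indices decreasing from left to
right), with `C^i_0 = 1` and `C^i_s = 0` for `s < 0` or `s > i`. -/
def elemC {R : Type*} [Ring R] (q : ℕ → R) (i : ℕ) (s : ℤ) : R :=
  ∑ T ∈ (Finset.Icc 1 i).powerset.filter (fun T => (T.card : ℤ) = s),
    (((T.sort (· ≤ ·)).reverse).map q).prod

/-- `S^i_j`: the sum of all ordered `i`-fold products `x_i x_{i−1} ⋯ x_1` in which each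
factor `x_l` is either `p l` or `q l` and exactly `j` of the factors are `q`'s; by
convention `S^0_0 = 1` and `S^i_j = 0` for `j < 0` or `j > i`. -/
def esS {R : Type*} [Ring R] (p q : ℕ → R) (i : ℕ) (j : ℤ) : R :=
  ∑ T ∈ (Finset.Icc 1 i).powerset.filter (fun T => (T.card : ℤ) = j),
    (((List.range i).reverse).map (fun l => if l + 1 ∈ T then q (l + 1) else p (l + 1))).prod

/-- Integer-indexed binomial coefficient. -/
def ichoose (l : ℕ) (t : ℤ) : ℕ := if t < 0 then 0 else l.choose t.toNat

lemma ichoose_pascal (l : ℕ) (t : ℤ) :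
    ichoose (l + 1) t = ichoose l t + ichoose l (t - 1) := by
  unfold ichoose
  rcases lt_trichotomy t 0 with h | h | h
  · simp [h, show t - 1 < 0 by omega]
  · subst h; simp
  · rw [if_neg (by omega), if_neg (by omega), if_neg (by omega)]
    have h1 : t.toNat = (t - 1).toNat + 1 := by omega
    rw [h1, Nat.choose_succ_succ']
    omega

lemma ichoose_coe (l t : ℕ) : ichoose l (t : ℤ) = l.choose t := by
  simp [ichoose]

lemma ichoose_of_lt (l : ℕ) (t : ℤ) (h : (l : ℤ) < t) : ichoose l t = 0 := by
  unfold ichoose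
  rw [if_neg (by omega)]
  exact Nat.choose_eq_zero_of_lt (by omega)

lemma sort_insert_max {a : ℕ} {T : Finset ℕ} (h1 : ∀ b ∈ T, b ≤ a) (h2 : a ∉ T) :
    (insert a T).sort (· ≤ ·) = T.sort (· ≤ ·) ++ [a] := by
  refine (fun h a b => List.Perm.eq_of_pairwise' (r := (· ≤ ·)) a b h) ?_ ?_ ?_
  · rw [← Multiset.coe_eq_coe]
    have h3 : ((T.sort (· ≤ ·) ++ [a] : List ℕ) : Multiset ℕ)
        = (T.sort (· ≤ ·) : Multiset ℕ) + (([a] : List ℕ) : Multiset ℕ) := rfl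
    rw [h3, Finset.sort_eq, Finset.sort_eq, Finset.insert_val_of_notMem h2, add_comm,
      show (([a] : List ℕ) : Multiset ℕ) = {a} from rfl, Multiset.singleton_add]
  · exact Finset.pairwise_sort _ _
  · rw [List.pairwise_append]
    refine ⟨Finset.pairwise_sort _ _, List.pairwise_singleton _ a, ?_⟩
    intro x hx y hy
    rw [List.mem_singleton] at hy
    subst hy
    exact h1 x ((Finset.mem_sort _).mp hx)

lemma elemC_of_neg {R : Type*} [Ring R] (q : ℕ → R) (i : ℕ) (s : ℤ) (hs : s < 0) :
    elemC q i s = 0 := by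
  unfold elemC
  rw [Finset.sum_eq_zero]
  intro T hT
  simp only [Finset.mem_filter] at hT
  omega

lemma esS_of_neg {R : Type*} [Ring R] (p q : ℕ → R) (i : ℕ) (j : ℤ) (hj : j < 0) :
    esS p q i j = 0 := by
  unfold esS
  rw [Finset.sum_eq_zero]
  intro T hT
  simp only [Finset.mem_filter] at hT
  omega

lemma esS_of_gt {R : Type*} [Ring R] (p q : ℕ → R) (i : ℕ) (j : ℤ) (hj : (i : ℤ) < j) :
    esS p q i j = 0 := by
  unfold esS
  rw [Finset.sum_eq_zero]
  intro T hT
  simp only [Finset.mem_filter, Finset.mem_powerset] at hT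
  have h1 := Finset.card_le_card hT.1
  have h2 : T.card ≤ i := le_trans h1 (by simp [Nat.card_Icc])
  omega

lemma esS_zero_eq {R : Type*} [Ring R] (p q : ℕ → R) (j : ℤ) :
    esS p q 0 j = if j = 0 then 1 else 0 := by
  unfold esS
  rw [show Finset.Icc 1 0 = (∅ : Finset ℕ) from by simp, Finset.powerset_empty,
    Finset.filter_singleton]
  by_cases h : j = 0
  · simp [h]
  · rw [if_neg (by simpa [eq_comm] using h), if_neg h, Finset.sum_empty]

lemma icc_succ (n : ℕ) : Finset.Icc 1 (n + 1) = insert (n + 1) (Finset.Icc 1 n) := by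
  ext x
  simp only [Finset.mem_Icc, Finset.mem_insert]
  omega

lemma elemC_succ {R : Type*} [Ring R] (q : ℕ → R) (n : ℕ) (s : ℤ) :
    elemC q (n + 1) s = q (n + 1) * elemC q n (s - 1) + elemC q n s := by
  unfold elemC
  have hnotmem : (n + 1) ∉ Finset.Icc 1 n := by simp
  rw [icc_succ, Finset.sum_filter, Finset.sum_powerset_insert hnotmem, add_comm]
  congr 1
  · rw [Finset.mul_sum, Finset.sum_filter]
    apply Finset.sum_congr rfl
    intro T hT
    rw [Finset.mem_powerset] at hT
    have hTa : (n + 1) ∉ T := fun h => hnotmem (hT h)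
    have hmax : ∀ b ∈ T, b ≤ n + 1 := by
      intro b hb
      have := hT hb
      simp only [Finset.mem_Icc] at this
      omega
    rw [Finset.card_insert_of_notMem hTa, sort_insert_max hmax hTa]
    simp only [List.reverse_append, List.reverse_singleton, List.singleton_append,
      List.map_cons, List.prod_cons, Nat.cast_add, Nat.cast_one]
    exact if_congr (by omega) rfl rfl
  · rw [Finset.sum_filter]

lemma esS_succ {R : Type*} [Ring R] (p q : ℕ → R) (n : ℕ) (j : ℤ) :
    esS p q (n + 1) j = q (n + 1) * esS p q n (j - 1) + p (n + 1) * esS p q n j := by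
  unfold esS
  have hnotmem : (n + 1) ∉ Finset.Icc 1 n := by simp
  have hrange : (List.range (n + 1)).reverse = n :: (List.range n).reverse := by
    rw [List.range_succ, List.reverse_append]
    simp
  rw [icc_succ, Finset.sum_filter, Finset.sum_powerset_insert hnotmem,
    add_comm (q (n + 1) * _)]
  congr 1
  · rw [Finset.mul_sum, Finset.sum_filter]
    apply Finset.sum_congr rfl
    intro T hT
    rw [Finset.mem_powerset] at hT
    have hTa : (n + 1) ∉ T := fun h => hnotmem (hT h)
    rw [hrange]
    simp only [List.map_cons, List.prod_cons]
    rw [if_neg hTa]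
  · rw [Finset.mul_sum, Finset.sum_filter]
    apply Finset.sum_congr rfl
    intro T hT
    rw [Finset.mem_powerset] at hT
    have hTa : (n + 1) ∉ T := fun h => hnotmem (hT h)
    have hcard : (insert (n + 1) T).card = T.card + 1 :=
      Finset.card_insert_of_notMem hTa
    have hprod : ((List.range n).reverse.map
          (fun l => if l + 1 ∈ insert (n + 1) T then q (l + 1) else p (l + 1))).prod
        = ((List.range n).reverse.map
          (fun l => if l + 1 ∈ T then q (l + 1) else p (l + 1))).prod := by
      congr 1
      apply List.map_congr_left
      intro l hl
      rw [List.mem_reverse, List.mem_range] at hl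
      have hiff : l + 1 ∈ insert (n + 1) T ↔ l + 1 ∈ T := by
        rw [Finset.mem_insert]
        constructor
        · rintro (h | h)
          · omega
          · exact h
        · exact Or.inr
      rw [if_congr hiff rfl rfl]
    rw [hrange]
    simp only [List.map_cons, List.prod_cons, hcard, Nat.cast_add, Nat.cast_one]
    rw [if_pos (Finset.mem_insert_self _ _), hprod]
    exact if_congr (by omega) rfl rfl

lemma elemC_zero_eq {R : Type*} [Ring R] (q : ℕ → R) (s : ℤ) :
    elemC q 0 s = if s = 0 then 1 else 0 := by
  unfold elemC
  rw [show Finset.Icc 1 0 = (∅ : Finset ℕ) from by simp, Finset.powerset_empty,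
    Finset.filter_singleton]
  by_cases h : s = 0
  · simp [h]
  · rw [if_neg (by simpa [eq_comm] using h), if_neg h, Finset.sum_empty]

lemma elemC_eq_sum_esS {R : Type*} [Ring R] (p q : ℕ → R) (hpq : ∀ l, p l + q l = 1)
    (n : ℕ) (t : ℤ) :
    elemC q n t = ∑ l ∈ Finset.range (n + 1), ichoose l t • esS p q n l := by
  induction n generalizing t with
  | zero =>
    rw [elemC_zero_eq, Finset.sum_range_one, Nat.cast_zero, esS_zero_eq, if_pos rfl]
    have hi0 : ichoose 0 t = if t = 0 then 1 else 0 := by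
      unfold ichoose
      rcases lt_trichotomy t 0 with h | h | h
      · rw [if_pos h, if_neg (by omega)]
      · subst h; simp
      · rw [if_neg (by omega), if_neg (by omega)]
        exact Nat.choose_eq_zero_of_lt (by omega)
    rw [hi0]
    split_ifs <;> simp
  | succ n ih =>
    rw [elemC_succ, ih, ih]
    have h1 : ∑ l ∈ Finset.range (n + 1 + 1), ichoose l t • esS p q (n + 1) (l : ℤ)
        = ∑ l ∈ Finset.range (n + 2), (ichoose l t • (q (n + 1) * esS p q n ((l : ℤ) - 1))
            + ichoose l t • (p (n + 1) * esS p q n (l : ℤ))) := by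
      apply Finset.sum_congr rfl
      intro l _
      rw [esS_succ, smul_add]
    rw [h1, Finset.sum_add_distrib]
    have hA : ∑ l ∈ Finset.range (n + 2), ichoose l t • (q (n + 1) * esS p q n ((l : ℤ) - 1))
        = ∑ l ∈ Finset.range (n + 1), (ichoose l t • (q (n + 1) * esS p q n (l : ℤ))
            + ichoose l (t - 1) • (q (n + 1) * esS p q n (l : ℤ))) := by
      rw [Finset.sum_range_succ']
      simp only [Nat.cast_zero, zero_sub, esS_of_neg p q n (-1) (by norm_num), mul_zero,
        smul_zero, add_zero]
      apply Finset.sum_congr rfl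
      intro l _
      have hc : ((l + 1 : ℕ) : ℤ) - 1 = (l : ℤ) := by push_cast; ring
      rw [hc, ichoose_pascal, add_smul]
    have hB : ∑ l ∈ Finset.range (n + 2), ichoose l t • (p (n + 1) * esS p q n (l : ℤ))
        = ∑ l ∈ Finset.range (n + 1), ichoose l t • (p (n + 1) * esS p q n (l : ℤ)) := by
      rw [Finset.sum_range_succ, show ((n + 1 : ℕ) : ℤ) = (n : ℤ) + 1 from by push_cast; ring,
        esS_of_gt p q n ((n : ℤ) + 1) (by omega), mul_zero, smul_zero, add_zero]
    rw [hA, hB, Finset.sum_add_distrib, Finset.mul_sum]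
    have hq : ∀ l ∈ Finset.range (n + 1),
        q (n + 1) * (ichoose l (t - 1) • esS p q n (l : ℤ))
          = ichoose l (t - 1) • (q (n + 1) * esS p q n (l : ℤ)) :=
      fun l _ => mul_smul_comm _ _ _
    rw [Finset.sum_congr rfl hq]
    have hcomb : ∑ l ∈ Finset.range (n + 1), ichoose l t • esS p q n (l : ℤ)
        = (∑ l ∈ Finset.range (n + 1), ichoose l t • (q (n + 1) * esS p q n (l : ℤ)))
          + ∑ l ∈ Finset.range (n + 1), ichoose l t • (p (n + 1) * esS p q n (l : ℤ)) := by
      rw [← Finset.sum_add_distrib]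
      apply Finset.sum_congr rfl
      intro l _
      rw [← smul_add, ← add_mul, add_comm (q (n + 1)), hpq, one_mul]
    rw [hcomb]
    abel

/-- If `p_l + q_l = 1` for every `l`, then for elements `H_1, …, H_i` of a left `R`-module:
`Σ_{t=0}^{i−1} C^{i−1}_t H_{t+1} = Σ_{l=0}^{i−1} S^{i−1}_l (Σ_{t=0}^{l} binom(l,t) H_{t+1})`. -/
theorem sum_elemC_smul_eq_sum_esS_smul {R M : Type*} [Ring R] [AddCommGroup M] [Module R M]
    (m : ℕ) (p q : ℕ → R) (hpq : ∀ l, p l + q l = 1)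
    (i : ℕ) (hi1 : 1 ≤ i) (him : i ≤ m) (H : ℕ → M) :
    ∑ t ∈ Finset.range i, elemC q (i - 1) (t : ℤ) • H (t + 1)
      = ∑ l ∈ Finset.range i, esS p q (i - 1) (l : ℤ) •
          (∑ t ∈ Finset.range (l + 1), (l.choose t) • H (t + 1)) := by
  obtain ⟨n, rfl⟩ : ∃ n, i = n + 1 := ⟨i - 1, (Nat.succ_pred_eq_of_pos hi1).symm⟩
  simp only [Nat.add_sub_cancel]
  calc ∑ t ∈ Finset.range (n + 1), elemC q n (t : ℤ) • H (t + 1)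
      = ∑ t ∈ Finset.range (n + 1), ∑ l ∈ Finset.range (n + 1),
          ichoose l (t : ℤ) • (esS p q n (l : ℤ) • H (t + 1)) := by
        apply Finset.sum_congr rfl
        intro t _
        rw [elemC_eq_sum_esS p q hpq, Finset.sum_smul]
        apply Finset.sum_congr rfl
        intro l _
        rw [smul_assoc]
    _ = ∑ l ∈ Finset.range (n + 1), ∑ t ∈ Finset.range (n + 1),
          ichoose l (t : ℤ) • (esS p q n (l : ℤ) • H (t + 1)) := Finset.sum_comm
    _ = ∑ l ∈ Finset.range (n + 1), esS p q n (l : ℤ) •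
          ∑ t ∈ Finset.range (l + 1), (l.choose t) • H (t + 1) := by
        apply Finset.sum_congr rfl
        intro l hl
        rw [Finset.mem_range] at hl
        rw [Finset.smul_sum]
        rw [show ∑ t ∈ Finset.range (l + 1), esS p q n (l : ℤ) • (l.choose t • H (t + 1))
            = ∑ t ∈ Finset.range (l + 1), ichoose l (t : ℤ) • (esS p q n (l : ℤ) • H (t + 1))
          from Finset.sum_congr rfl fun t _ => by rw [← ichoose_coe, smul_comm]]
        refine (Finset.sum_subset (Finset.range_subset_range.mpr (by omega)) ?_).symm
        intro t ht hts
        rw [Finset.mem_range] at ht hts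
        rw [ichoose_of_lt l (t : ℤ) (by omega), zero_smul]
end
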